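/- Let C ≥ 1, 0 ≤ a ≤ ⌈C/2⌉, and 0 ≤ b ≤ ⌊C/2⌋ be integers. Consider the team competition Γ^C_{a,b} with m = n = (C−a) + (⌊C/2⌋−b) players on each side, T = C−a−b rounds, P i j = 1 if i = j ≤ C−a and P i j = 0 otherwise, and utility U(t) = 1 if t ≥ ⌈C/2⌉−a and U(t) = −1 otherwise. Then the value of Γ^C_{a,b} is strictly greater than −1; i.e., Team 1 can guarantee an expected utility larger than −1. -/

import Mathlib

/-- Value function of the team competition `G(T,P,U)`, by backward induction.
`gval m n P U r X Y w` is the value of the state where the players in `X` (Team 1)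
and `Y` (Team 2) have already played, Team 1 has won `w` rounds so far, and
`r = T - |X|` rounds remain to be played.  The value of the whole game is
`gval m n P U T ∅ ∅ 0`. -/
noncomputable def gval (m n : ℕ) (P : Fin m → Fin n → ℝ) (U : ℕ → ℝ) :
    ℕ → Finset (Fin m) → Finset (Fin n) → ℕ → ℝ
  | 0, _, _, w => U w
  | r + 1, X, Y, w =>
      sSup {v : ℝ | ∃ p : Fin m → ℝ,
        (∀ i, 0 ≤ p i) ∧ (∀ i ∈ X, p i = 0) ∧ (∑ i, p i) = 1 ∧
        v = sInf {u : ℝ | ∃ j, j ∉ Y ∧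
          u = ∑ i, p i *
            (P i j * gval m n P U r (insert i X) (insert j Y) (w + 1) +
             (1 - P i j) * gval m n P U r (insert i X) (insert j Y) w)}}


lemma gval_aux_bounds (m n : ℕ) (P : Fin m → Fin n → ℝ) (U : ℕ → ℝ)
    (hP : ∀ i j, 0 ≤ P i j ∧ P i j ≤ 1) (r : ℕ)
    (hrec : ∀ X Y w, -1 ≤ gval m n P U r X Y w ∧ gval m n P U r X Y w ≤ 1)
    (X : Finset (Fin m)) (Y : Finset (Fin n)) (w : ℕ) :
    ∀ v ∈ {v : ℝ | ∃ p : Fin m → ℝ,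
        (∀ i, 0 ≤ p i) ∧ (∀ i ∈ X, p i = 0) ∧ (∑ i, p i) = 1 ∧
        v = sInf {u : ℝ | ∃ j, j ∉ Y ∧
          u = ∑ i, p i *
            (P i j * gval m n P U r (insert i X) (insert j Y) (w + 1) +
             (1 - P i j) * gval m n P U r (insert i X) (insert j Y) w)}},
      -1 ≤ v ∧ v ≤ 1 := by
  rintro v ⟨p, hp0, hpX, hps, rfl⟩
  have huT : ∀ u ∈ {u : ℝ | ∃ j, j ∉ Y ∧
          u = ∑ i, p i *
            (P i j * gval m n P U r (insert i X) (insert j Y) (w + 1) +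
             (1 - P i j) * gval m n P U r (insert i X) (insert j Y) w)},
      -1 ≤ u ∧ u ≤ 1 := by
    rintro u ⟨j, hj, rfl⟩
    have hterm : ∀ i : Fin m,
        -(p i) ≤ p i * (P i j * gval m n P U r (insert i X) (insert j Y) (w + 1) +
             (1 - P i j) * gval m n P U r (insert i X) (insert j Y) w) ∧
        p i * (P i j * gval m n P U r (insert i X) (insert j Y) (w + 1) +
             (1 - P i j) * gval m n P U r (insert i X) (insert j Y) w) ≤ p i := by
      intro i
      obtain ⟨hA1, hA2⟩ := hrec (insert i X) (insert j Y) (w + 1)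
      obtain ⟨hB1, hB2⟩ := hrec (insert i X) (insert j Y) w
      obtain ⟨hP1, hP2⟩ := hP i j
      have h0 := hp0 i
      have hin1 : -1 ≤ P i j * gval m n P U r (insert i X) (insert j Y) (w + 1) +
             (1 - P i j) * gval m n P U r (insert i X) (insert j Y) w := by nlinarith
      have hin2 : P i j * gval m n P U r (insert i X) (insert j Y) (w + 1) +
             (1 - P i j) * gval m n P U r (insert i X) (insert j Y) w ≤ 1 := by nlinarith
      constructor
      · nlinarith [mul_le_mul_of_nonneg_left hin1 h0]
      · nlinarith [mul_le_mul_of_nonneg_left hin2 h0]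
    constructor
    · have h2 : ∑ i : Fin m, -(p i) ≤ ∑ i : Fin m, p i *
        (P i j * gval m n P U r (insert i X) (insert j Y) (w + 1) +
             (1 - P i j) * gval m n P U r (insert i X) (insert j Y) w) :=
        Finset.sum_le_sum (fun i _ => (hterm i).1)
      have h3 : ∑ i : Fin m, -(p i) = -1 := by
        rw [Finset.sum_neg_distrib, hps]
      linarith
    · have h2 : ∑ i : Fin m, p i *
        (P i j * gval m n P U r (insert i X) (insert j Y) (w + 1) +
             (1 - P i j) * gval m n P U r (insert i X) (insert j Y) w) ≤ ∑ i : Fin m, p i :=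
        Finset.sum_le_sum (fun i _ => (hterm i).2)
      linarith [hps ▸ h2]
  rcases Set.eq_empty_or_nonempty {u : ℝ | ∃ j, j ∉ Y ∧
          u = ∑ i, p i *
            (P i j * gval m n P U r (insert i X) (insert j Y) (w + 1) +
             (1 - P i j) * gval m n P U r (insert i X) (insert j Y) w)} with he | hne
  · rw [he, Real.sInf_empty]; norm_num
  · obtain ⟨u, hu⟩ := hne
    constructor
    · exact le_csInf ⟨u, hu⟩ (fun x hx => (huT x hx).1)
    · exact le_trans (csInf_le ⟨-1, fun x hx => (huT x hx).1⟩ hu) (huT u hu).2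

lemma gval_bounds (m n : ℕ) (P : Fin m → Fin n → ℝ) (U : ℕ → ℝ)
    (hP : ∀ i j, 0 ≤ P i j ∧ P i j ≤ 1) (hU : ∀ w, -1 ≤ U w ∧ U w ≤ 1) :
    ∀ (r : ℕ) (X : Finset (Fin m)) (Y : Finset (Fin n)) (w : ℕ),
      -1 ≤ gval m n P U r X Y w ∧ gval m n P U r X Y w ≤ 1 := by
  intro r
  induction r with
  | zero => intro X Y w; rw [gval]; exact hU w
  | succ r ih =>
    intro X Y w
    rw [gval]
    have hb := gval_aux_bounds m n P U hP r ih X Y w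
    rcases Set.eq_empty_or_nonempty {v : ℝ | ∃ p : Fin m → ℝ,
        (∀ i, 0 ≤ p i) ∧ (∀ i ∈ X, p i = 0) ∧ (∑ i, p i) = 1 ∧
        v = sInf {u : ℝ | ∃ j, j ∉ Y ∧
          u = ∑ i, p i *
            (P i j * gval m n P U r (insert i X) (insert j Y) (w + 1) +
             (1 - P i j) * gval m n P U r (insert i X) (insert j Y) w)}} with he | hne
    · rw [he, Real.sSup_empty]; norm_num
    · obtain ⟨v, hv⟩ := hne
      constructor
      · exact le_trans (hb v hv).1 (le_csSup ⟨1, fun x hx => (hb x hx).2⟩ hv)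
      · exact Real.sSup_le (fun x hx => (hb x hx).2) (by linarith [(hb v hv).1])

lemma key (C a b : ℕ) (hC : 1 ≤ C) (ha : a ≤ (C + 1) / 2) (hb : b ≤ C / 2) :
    ∀ (r w : ℕ) (X Y : Finset (Fin ((C - a) + (C / 2 - b)))),
      X.card + r ≤ (C - a) + (C / 2 - b) →
      Y.card + r ≤ (C - a) + (C / 2 - b) →
      (∀ j : Fin ((C - a) + (C / 2 - b)), (j : ℕ) < C - a → j ∉ Y → j ∉ X) →
      (Finset.univ.filter fun x => x ∉ Y ∧ C - a ≤ (x : ℕ)).card ≤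
        (Finset.univ.filter fun x => x ∉ X ∧ C - a ≤ (x : ℕ)).card →
      ((C + 1) / 2 - a) + (Finset.univ.filter fun x => x ∉ Y ∧ C - a ≤ (x : ℕ)).card ≤ w + r →
      -1 + 2 * ((((C - a) + (C / 2 - b) : ℕ) : ℝ)⁻¹) ^ r ≤
        gval ((C - a) + (C / 2 - b)) ((C - a) + (C / 2 - b))
          (fun i j => if (i : ℕ) = (j : ℕ) ∧ (i : ℕ) < C - a then (1 : ℝ) else 0)
          (fun t => if (C + 1) / 2 - a ≤ t then (1 : ℝ) else -1) r X Y w := by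
  set m : ℕ := (C - a) + (C / 2 - b) with hm
  set P : Fin m → Fin m → ℝ :=
    fun i j => if (i : ℕ) = (j : ℕ) ∧ (i : ℕ) < C - a then (1 : ℝ) else 0 with hP
  set U : ℕ → ℝ := fun t => if (C + 1) / 2 - a ≤ t then (1 : ℝ) else -1 with hU
  have hPb : ∀ i j, 0 ≤ P i j ∧ P i j ≤ 1 := by
    intro i j; simp only [hP]; split <;> norm_num
  have hUb : ∀ w, -1 ≤ U w ∧ U w ≤ 1 := by
    intro w; simp only [hU]; split <;> norm_num
  intro r
  induction r with
  | zero =>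
    intro w X Y hX hY hM hBu hth
    rw [gval]
    have : (C + 1) / 2 - a ≤ w := by omega
    simp only [hU, if_pos this]
    norm_num
  | succ r ih =>
    intro w X Y hX hY hM hBu hth
    have hXcard : X.card + (r + 1) ≤ m := hX
    have hm1 : 1 ≤ m := by omega
    set s : ℕ := m - X.card with hs
    have hs1 : 1 ≤ s := by omega
    have hXc : Xᶜ.card = s := by
      simp [Finset.card_compl, hs]
    set p : Fin m → ℝ := fun i => if i ∈ Xᶜ then ((s : ℕ) : ℝ)⁻¹ else 0 with hpdef
    have hp0 : ∀ i, 0 ≤ p i := by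
      intro i; simp only [hpdef]; split <;> positivity
    have hpX : ∀ i ∈ X, p i = 0 := by
      intro i hi; simp [hpdef, hi]
    have hpsum : ∑ i, p i = 1 := by
      simp only [hpdef]
      rw [Finset.sum_ite_mem, Finset.univ_inter, Finset.sum_const, hXc, nsmul_eq_mul,
        mul_inv_cancel₀]
      exact_mod_cast (by omega : (0:ℕ) < s).ne'
    rw [gval]
    have hbd := gval_aux_bounds m m P U hPb r (gval_bounds m m P U hPb hUb r) X Y w
    have hbdd : BddAbove {v : ℝ | ∃ p : Fin m → ℝ,
        (∀ i, 0 ≤ p i) ∧ (∀ i ∈ X, p i = 0) ∧ (∑ i, p i) = 1 ∧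
        v = sInf {u : ℝ | ∃ j, j ∉ Y ∧
          u = ∑ i, p i *
            (P i j * gval m m P U r (insert i X) (insert j Y) (w + 1) +
             (1 - P i j) * gval m m P U r (insert i X) (insert j Y) w)}} :=
      ⟨1, fun v hv => (hbd v hv).2⟩
    have hmem : sInf {u : ℝ | ∃ j, j ∉ Y ∧
          u = ∑ i, p i *
            (P i j * gval m m P U r (insert i X) (insert j Y) (w + 1) +
             (1 - P i j) * gval m m P U r (insert i X) (insert j Y) w)} ∈
        {v : ℝ | ∃ p : Fin m → ℝ,
        (∀ i, 0 ≤ p i) ∧ (∀ i ∈ X, p i = 0) ∧ (∑ i, p i) = 1 ∧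
        v = sInf {u : ℝ | ∃ j, j ∉ Y ∧
          u = ∑ i, p i *
            (P i j * gval m m P U r (insert i X) (insert j Y) (w + 1) +
             (1 - P i j) * gval m m P U r (insert i X) (insert j Y) w)}} :=
      ⟨p, hp0, hpX, hpsum, rfl⟩
    refine le_trans ?_ (le_csSup hbdd hmem)
    -- there exists j ∉ Y
    have hYne : ∃ j : Fin m, j ∉ Y := by
      have : Yᶜ.card ≠ 0 := by
        simp [Finset.card_compl]; omega
      obtain ⟨j, hj⟩ := Finset.card_pos.mp (Nat.pos_of_ne_zero this)
      exact ⟨j, Finset.mem_compl.mp hj⟩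
    obtain ⟨j0, hj0⟩ := hYne
    refine le_csInf ⟨_, ⟨j0, hj0, rfl⟩⟩ ?_
    rintro u ⟨j, hj, rfl⟩
    -- find the good response i₀
    have hgood : ∃ i₀ : Fin m, i₀ ∉ X ∧
        -1 + 2 * (((m : ℕ) : ℝ)⁻¹) ^ r ≤
          P i₀ j * gval m m P U r (insert i₀ X) (insert j Y) (w + 1) +
            (1 - P i₀ j) * gval m m P U r (insert i₀ X) (insert j Y) w := by
      by_cases hjK : (j : ℕ) < C - a
      · -- beatable opponent: play i₀ = j
        have hjX : j ∉ X := hM j hjK hj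
        refine ⟨j, hjX, ?_⟩
        have hPjj : P j j = 1 := by simp [hP, hjK]
        have h9 := ih (w + 1) (insert j X) (insert j Y) ?_ ?_ ?_ ?_ ?_
        · rw [hPjj]; linarith
        · calc (insert j X).card + r ≤ X.card + 1 + r := by
                have := Finset.card_insert_le j X; omega
            _ ≤ m := by omega
        · calc (insert j Y).card + r ≤ Y.card + 1 + r := by
                have := Finset.card_insert_le j Y; omega
            _ ≤ m := by omega
        · intro j' hj'K hj'
          simp only [Finset.mem_insert, not_or] at hj' ⊢
          exact ⟨hj'.1, hM j' hj'K hj'.2⟩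
        · have e1 : (Finset.univ.filter fun x : Fin m => x ∉ insert j Y ∧ C - a ≤ (x : ℕ)) =
              Finset.univ.filter fun x => x ∉ Y ∧ C - a ≤ (x : ℕ) := by
            ext x
            simp only [Finset.mem_filter, Finset.mem_insert, Finset.mem_univ, true_and, not_or]
            constructor
            · rintro ⟨⟨h1, h2⟩, h3⟩; exact ⟨h2, h3⟩
            · rintro ⟨h1, h2⟩
              refine ⟨⟨?_, h1⟩, h2⟩
              rintro rfl; omega
          have e2 : (Finset.univ.filter fun x : Fin m => x ∉ insert j X ∧ C - a ≤ (x : ℕ)) =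
              Finset.univ.filter fun x => x ∉ X ∧ C - a ≤ (x : ℕ) := by
            ext x
            simp only [Finset.mem_filter, Finset.mem_insert, Finset.mem_univ, true_and, not_or]
            constructor
            · rintro ⟨⟨h1, h2⟩, h3⟩; exact ⟨h2, h3⟩
            · rintro ⟨h1, h2⟩
              refine ⟨⟨?_, h1⟩, h2⟩
              rintro rfl; omega
          rw [e1, e2]; exact hBu
        · have e1 : (Finset.univ.filter fun x : Fin m => x ∉ insert j Y ∧ C - a ≤ (x : ℕ)) =
              Finset.univ.filter fun x => x ∉ Y ∧ C - a ≤ (x : ℕ) := by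
            ext x
            simp only [Finset.mem_filter, Finset.mem_insert, Finset.mem_univ, true_and, not_or]
            constructor
            · rintro ⟨⟨h1, h2⟩, h3⟩; exact ⟨h2, h3⟩
            · rintro ⟨h1, h2⟩
              refine ⟨⟨?_, h1⟩, h2⟩
              rintro rfl; omega
          rw [e1]; omega
      · -- invincible opponent: burn a useless player
        push_neg at hjK
        have hjmem : j ∈ Finset.univ.filter fun x : Fin m => x ∉ Y ∧ C - a ≤ (x : ℕ) := by
          simp only [Finset.mem_filter, Finset.mem_univ, true_and]
          exact ⟨hj, hjK⟩
        have hB1 : 1 ≤ (Finset.univ.filter fun x : Fin m => x ∉ Y ∧ C - a ≤ (x : ℕ)).card :=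
          Finset.card_pos.mpr ⟨j, hjmem⟩
        have hu1 : 0 < (Finset.univ.filter fun x : Fin m => x ∉ X ∧ C - a ≤ (x : ℕ)).card := by
          omega
        obtain ⟨i₀, hi₀⟩ := Finset.card_pos.mp hu1
        simp only [Finset.mem_filter, Finset.mem_univ, true_and] at hi₀
        obtain ⟨hi₀X, hi₀K⟩ := hi₀
        refine ⟨i₀, hi₀X, ?_⟩
        have hPij : P i₀ j = 0 := by
          simp only [hP, ite_eq_right_iff, and_imp]
          intro _ h; omega
        have key2 := ih w (insert i₀ X) (insert j Y) ?_ ?_ ?_ ?_ ?_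
        · rw [hPij]; linarith
        · calc (insert i₀ X).card + r ≤ X.card + 1 + r := by
                have := Finset.card_insert_le i₀ X; omega
            _ ≤ m := by omega
        · calc (insert j Y).card + r ≤ Y.card + 1 + r := by
                have := Finset.card_insert_le j Y; omega
            _ ≤ m := by omega
        · intro j' hj'K hj'
          simp only [Finset.mem_insert, not_or] at hj' ⊢
          refine ⟨?_, hM j' hj'K hj'.2⟩
          intro h; rw [h] at hj'K; omega
        · have e1 : (Finset.univ.filter fun x : Fin m => x ∉ insert j Y ∧ C - a ≤ (x : ℕ)) =
              (Finset.univ.filter fun x : Fin m => x ∉ Y ∧ C - a ≤ (x : ℕ)).erase j := by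
            ext x
            simp only [Finset.mem_filter, Finset.mem_insert, Finset.mem_univ, true_and, not_or,
              Finset.mem_erase]
            tauto
          have e2 : (Finset.univ.filter fun x : Fin m => x ∉ insert i₀ X ∧ C - a ≤ (x : ℕ)) =
              (Finset.univ.filter fun x : Fin m => x ∉ X ∧ C - a ≤ (x : ℕ)).erase i₀ := by
            ext x
            simp only [Finset.mem_filter, Finset.mem_insert, Finset.mem_univ, true_and, not_or,
              Finset.mem_erase]
            tauto
          rw [e1, e2, Finset.card_erase_of_mem hjmem, Finset.card_erase_of_mem (by
            simp only [Finset.mem_filter, Finset.mem_univ, true_and]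
            exact ⟨hi₀X, hi₀K⟩)]
          omega
        · have e1 : (Finset.univ.filter fun x : Fin m => x ∉ insert j Y ∧ C - a ≤ (x : ℕ)) =
              (Finset.univ.filter fun x : Fin m => x ∉ Y ∧ C - a ≤ (x : ℕ)).erase j := by
            ext x
            simp only [Finset.mem_filter, Finset.mem_insert, Finset.mem_univ, true_and, not_or,
              Finset.mem_erase]
            tauto
          rw [e1, Finset.card_erase_of_mem hjmem]
          omega
    obtain ⟨i₀, hi₀X, hterm⟩ := hgood
    -- all terms are ≥ -1
    set g : Fin m → ℝ := fun i =>
      P i j * gval m m P U r (insert i X) (insert j Y) (w + 1) +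
        (1 - P i j) * gval m m P U r (insert i X) (insert j Y) w with hg
    have hgall : ∀ i, -1 ≤ g i := by
      intro i
      obtain ⟨hA1, hA2⟩ := gval_bounds m m P U hPb hUb r (insert i X) (insert j Y) (w + 1)
      obtain ⟨hB1, hB2⟩ := gval_bounds m m P U hPb hUb r (insert i X) (insert j Y) w
      obtain ⟨hP1, hP2⟩ := hPb i j
      simp only [hg]
      nlinarith
    -- rewrite the sum
    have hsum1 : ∑ i, p i * g i = ((s : ℕ) : ℝ)⁻¹ * ∑ i ∈ Xᶜ, g i := by
      rw [Finset.mul_sum]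
      have : ∀ i : Fin m, p i * g i = if i ∈ Xᶜ then ((s : ℕ) : ℝ)⁻¹ * g i else 0 := by
        intro i; simp only [hpdef]; split <;> simp
      rw [Finset.sum_congr rfl (fun i _ => this i), Finset.sum_ite_mem, Finset.univ_inter]
    have hi₀c : i₀ ∈ Xᶜ := Finset.mem_compl.mpr hi₀X
    have hsum2 : ∑ i ∈ Xᶜ, g i = g i₀ + ∑ i ∈ Xᶜ.erase i₀, g i :=
      (Finset.add_sum_erase _ g hi₀c).symm
    have hsum3 : (((s - 1 : ℕ) : ℝ)) * (-1) ≤ ∑ i ∈ Xᶜ.erase i₀, g i := by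
      have hcard : (Xᶜ.erase i₀).card = s - 1 := by
        rw [Finset.card_erase_of_mem hi₀c, hXc]
      have := Finset.card_nsmul_le_sum (Xᶜ.erase i₀) g (-1) (fun i _ => hgall i)
      rw [hcard, nsmul_eq_mul] at this
      exact this
    have hcast : ((s - 1 : ℕ) : ℝ) = ((s : ℕ) : ℝ) - 1 := by
      have : (1 : ℕ) ≤ s := hs1
      push_cast [Nat.cast_sub this]
      ring
    have hspos : (0 : ℝ) < ((s : ℕ) : ℝ) := by exact_mod_cast (by omega : (0:ℕ) < s)
    have hmpos : (0 : ℝ) < ((m : ℕ) : ℝ) := by exact_mod_cast (by omega : (0:ℕ) < m)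
    have hsm : ((s : ℕ) : ℝ) ≤ ((m : ℕ) : ℝ) := by exact_mod_cast Nat.sub_le m X.card
    have hinv : (((m : ℕ) : ℝ))⁻¹ ≤ (((s : ℕ) : ℝ))⁻¹ := by
      apply inv_anti₀ hspos hsm
    have hqpos : (0 : ℝ) ≤ (((m : ℕ) : ℝ)⁻¹) ^ r := by positivity
    have hsinv : ((s : ℕ) : ℝ)⁻¹ * ((s : ℕ) : ℝ) = 1 := inv_mul_cancel₀ (ne_of_gt hspos)
    have hsinvpos : (0 : ℝ) < ((s : ℕ) : ℝ)⁻¹ := by positivity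
    rw [hsum1, hsum2]
    have hlow : (-1 + 2 * (((m : ℕ) : ℝ)⁻¹) ^ r) + (((s : ℕ) : ℝ) - 1) * (-1) ≤
        g i₀ + ∑ i ∈ Xᶜ.erase i₀, g i := by
      rw [← hcast]; linarith
    have := mul_le_mul_of_nonneg_left hlow (le_of_lt hsinvpos)
    calc -1 + 2 * (((m : ℕ) : ℝ)⁻¹) ^ (r + 1)
        = -1 + 2 * (((m : ℕ) : ℝ)⁻¹) ^ r * ((m : ℕ) : ℝ)⁻¹ := by ring
      _ ≤ ((s : ℕ) : ℝ)⁻¹ * ((-1 + 2 * (((m : ℕ) : ℝ)⁻¹) ^ r) + (((s : ℕ) : ℝ) - 1) * (-1)) := by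
          have h1 : ((s : ℕ) : ℝ)⁻¹ * ((-1 + 2 * (((m : ℕ) : ℝ)⁻¹) ^ r) + (((s : ℕ) : ℝ) - 1) * (-1))
              = 2 * (((s : ℕ) : ℝ)⁻¹ * (((m : ℕ) : ℝ)⁻¹) ^ r)
                - (((s : ℕ) : ℝ)⁻¹ * ((s : ℕ) : ℝ)) := by ring
          rw [hsinv] at h1
          have h2 : ((m : ℕ) : ℝ)⁻¹ * (((m : ℕ) : ℝ)⁻¹) ^ r ≤
              ((s : ℕ) : ℝ)⁻¹ * (((m : ℕ) : ℝ)⁻¹) ^ r :=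
            mul_le_mul_of_nonneg_right hinv hqpos
          linarith [h1, h2]
      _ ≤ ((s : ℕ) : ℝ)⁻¹ * (g i₀ + ∑ i ∈ Xᶜ.erase i₀, g i) := this

/-- (Lemma on the games `Γ^C_{a,b}`.)  For integers `C ≥ 1`,
`0 ≤ a ≤ ⌈C/2⌉`, `0 ≤ b ≤ ⌊C/2⌋`, the game `Γ^C_{a,b}` with
`m = n = (C-a) + (⌊C/2⌋-b)` players on each side, `T = C-a-b` rounds,
`P i j = 1` iff `i = j ≤ C-a`, and utility `1` if Team 1 wins at least
`⌈C/2⌉-a` rounds and `-1` otherwise, has value strictly greater than `-1`. -/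
theorem gamma_game_value_gt (C a b : ℕ) (hC : 1 ≤ C)
    (ha : a ≤ (C + 1) / 2) (hb : b ≤ C / 2) :
    gval ((C - a) + (C / 2 - b)) ((C - a) + (C / 2 - b))
      (fun i j => if (i : ℕ) = (j : ℕ) ∧ (i : ℕ) < C - a then (1 : ℝ) else 0)
      (fun t => if (C + 1) / 2 - a ≤ t then (1 : ℝ) else -1)
      (C - a - b) ∅ ∅ 0 > -1 := by
  have hB0 : (Finset.univ.filter fun x : Fin ((C - a) + (C / 2 - b)) =>
      x ∉ (∅ : Finset (Fin ((C - a) + (C / 2 - b)))) ∧ C - a ≤ (x : ℕ)).card ≤ C / 2 - b := by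
    have := Finset.card_le_card_of_injOn (f := fun x : Fin ((C - a) + (C / 2 - b)) =>
        (x : ℕ) - (C - a))
      (s := Finset.univ.filter fun x : Fin ((C - a) + (C / 2 - b)) =>
        x ∉ (∅ : Finset (Fin ((C - a) + (C / 2 - b)))) ∧ C - a ≤ (x : ℕ))
      (t := Finset.range (C / 2 - b)) ?_ ?_
    · simpa using this
    · intro x hx
      simp only [Finset.mem_coe, Finset.mem_filter, Finset.mem_univ, true_and, Finset.notMem_empty,
        not_false_iff] at hx
      have := x.isLt
      simp only [Finset.mem_coe, Finset.mem_range]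
      omega
    · intro x hx y hy hxy
      simp only [Finset.coe_filter, Set.mem_setOf_eq, Finset.mem_univ, true_and,
        Finset.notMem_empty, not_false_iff] at hx hy
      have hx2 := x.isLt
      have hy2 := y.isLt
      have hxy' : (x : ℕ) - (C - a) = (y : ℕ) - (C - a) := hxy
      have : (x : ℕ) = (y : ℕ) := by omega
      exact Fin.ext this
  have h := key C a b hC ha hb (C - a - b) 0 ∅ ∅ (by simp; omega) (by simp; omega)
    (by intro j _ _; exact Finset.notMem_empty j)
    le_rfl
    (by
      simp only [Nat.zero_add]
      omega)
  have hpos : (0 : ℝ) < ((((C - a) + (C / 2 - b) : ℕ)) : ℝ)⁻¹ ^ (C - a - b) := by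
    rcases Nat.eq_zero_or_pos (C - a - b) with h0 | h0
    · simp [h0]
    · have hm1 : 1 ≤ (C - a) + (C / 2 - b) := by omega
      have : (0 : ℝ) < (((C - a) + (C / 2 - b) : ℕ) : ℝ) := by exact_mod_cast hm1
      exact pow_pos (inv_pos.mpr this) _
  linarith
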